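/- Let n ≥ 2 be an integer, let x₀ ∈ ℝⁿ, let f : [0,∞) → ℝ, and suppose u(x) = f(|x − x₀|) defines a C² function u : ℝⁿ → ℝ with |∇u(x)| < 1 for all x ∈ ℝⁿ satisfying the translating soliton equation Δu(x) + D²u(x)(∇u(x), ∇u(x))/(1 − |∇u(x)|²) = 1 for all x ∈ ℝⁿ. Then the function r(t) := f(t) − f(0) is a C² solution of r''(t)/(1 − r'(t)²) + ((n−1)/t)·r'(t) = 1 on (0,∞) with r(0) = 0, r'(0) = 0, and 0 < r'(t) < 1 for all t ∈ (0,∞); in particular u(x) = r(|x − x₀|) + u(x₀). -/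

import Mathlib

open Set Filter Topology

section aux
variable {E : Type*} [NormedAddCommGroup E] [NormedSpace ℝ E]

lemma aux_line_deriv {u : E → ℝ} (hu : Differentiable ℝ u) (x v : E) (s : ℝ) :
    HasDerivAt (fun r : ℝ => u (x + r • v)) (fderiv ℝ u (x + s • v) v) s := by
  have hl : HasDerivAt (fun r : ℝ => x + r • v) ((1:ℝ) • v) s :=
    ((hasDerivAt_id s).smul_const v).const_add x
  rw [one_smul] at hl
  exact (hu (x + s • v)).hasFDerivAt.comp_hasDerivAt s hl

lemma aux_line_deriv2 {u : E → ℝ} (hu : ContDiff ℝ 2 u) (x v : E) :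
    HasDerivAt (fun r : ℝ => fderiv ℝ u (x + r • v) v)
      (iteratedFDeriv ℝ 2 u x ![v, v]) 0 := by
  have hF : Differentiable ℝ (fderiv ℝ u) :=
    (hu.fderiv_right (m := 1) (by norm_num)).differentiable (by norm_num)
  have hl : HasDerivAt (fun r : ℝ => x + r • v) ((1:ℝ) • v) 0 :=
    ((hasDerivAt_id 0).smul_const v).const_add x
  rw [one_smul] at hl
  have h1 : HasDerivAt (fun r : ℝ => fderiv ℝ u (x + r • v))
      (fderiv ℝ (fderiv ℝ u) x v) 0 := by
    have := (hF (x + (0:ℝ) • v)).hasFDerivAt.comp_hasDerivAt 0 hl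
    simpa [Function.comp_def] using this
  have h2 := (ContinuousLinearMap.apply ℝ ℝ v).hasFDerivAt.comp_hasDerivAt 0 h1
  rw [iteratedFDeriv_two_apply]
  simpa [Function.comp_def] using h2

lemma aux_even_deriv_zero {g : ℝ → ℝ} (hg : ∀ t, g (-t) = g t)
    (hd : DifferentiableAt ℝ g 0) : deriv g 0 = 0 := by
  have h1 : HasDerivAt g (deriv g 0) 0 := hd.hasDerivAt
  have h2 : HasDerivAt (fun t : ℝ => g (-t)) (deriv g 0 * (-1)) 0 := by
    have := HasDerivAt.comp (0:ℝ)
      (show HasDerivAt g (deriv g 0) (-(0:ℝ)) by simpa using h1) (hasDerivAt_neg 0)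
    simpa [Function.comp_def] using this
  have h3 : HasDerivAt g (deriv g 0 * (-1)) 0 := by
    have : (fun t : ℝ => g (-t)) = g := funext hg
    rwa [this] at h2
  have := h1.unique h3
  linarith
end aux

lemma aux_alg (c d S t P m : ℝ) (hS : S ≠ 0) (ht : t ≠ 0) (hS2 : S^2 = 1 - c^2)
    (hd : d = (1 - m/t*c)*(1-c^2)) :
    m * P * (c / S) + P*t*((d*S - c*(1/(2*S)*(-(2*c^1*d))))/S^2) = P*t/S := by
  have h1 : 1 - c^2 = S^2 := hS2.symm
  rw [h1] at hd
  subst hd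
  field_simp
  linear_combination (P*t - P*m*c) * hS2

set_option maxHeartbeats 1000000 in
theorem stmt_8 (n : ℕ) (hn : 2 ≤ n) (x₀ : EuclideanSpace ℝ (Fin n))
    (f : ℝ → ℝ) (u : EuclideanSpace ℝ (Fin n) → ℝ)
    (hu : ∀ x, u x = f ‖x - x₀‖)
    (hC2 : ContDiff ℝ 2 u)
    (hsp : ∀ x, ‖gradient u x‖ < 1)
    (heq : ∀ x : EuclideanSpace ℝ (Fin n),
      (∑ i : Fin n, iteratedFDeriv ℝ 2 u x
          ![EuclideanSpace.single i 1, EuclideanSpace.single i 1]) +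
        iteratedFDeriv ℝ 2 u x ![gradient u x, gradient u x] /
          (1 - ‖gradient u x‖ ^ 2) = 1) :
    ContDiffOn ℝ 2 (fun t => f t - f 0) (Set.Ici 0) ∧
    (∀ t ∈ Set.Ioi (0:ℝ),
      deriv (deriv (fun s => f s - f 0)) t /
          (1 - (deriv (fun s => f s - f 0) t) ^ 2) +
        ((n : ℝ) - 1) / t * deriv (fun s => f s - f 0) t = 1) ∧
    (fun t => f t - f 0) 0 = 0 ∧
    derivWithin (fun s => f s - f 0) (Set.Ici 0) 0 = 0 ∧
    (∀ t ∈ Set.Ioi (0:ℝ),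
      0 < deriv (fun s => f s - f 0) t ∧ deriv (fun s => f s - f 0) t < 1) ∧
    (∀ x, u x = (fun t => f t - f 0) ‖x - x₀‖ + u x₀) := by
  haveI : NeZero n := ⟨by omega⟩
  set e0 : EuclideanSpace ℝ (Fin n) := EuclideanSpace.single 0 1 with he0
  have hudiff : Differentiable ℝ u := hC2.differentiable (by norm_num)
  set G : ℝ → ℝ := fun s => u (x₀ + s • e0) with hG
  have hGC2 : ContDiff ℝ 2 G :=
    hC2.comp (contDiff_const.add (contDiff_id.smul contDiff_const))
  have hGd : Differentiable ℝ G := hGC2.differentiable (by norm_num)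
  set w : ℝ → ℝ := deriv G with hw
  have hwC1 : ContDiff ℝ 1 w := by
    have h2 : ContDiff ℝ ((1:WithTop ℕ∞) + 1) G := by
      convert hGC2 using 2
      exact one_add_one_eq_two
    exact (contDiff_succ_iff_deriv.mp h2).2.2
  have hwd : Differentiable ℝ w := hwC1.differentiable (by norm_num)
  have hwc : Continuous w := hwC1.continuous
  -- G is radial
  have hGabs : ∀ s : ℝ, G s = f |s| := by
    intro s
    rw [hG]
    simp only [hu, add_sub_cancel_left, norm_smul, he0, EuclideanSpace.norm_single,
      norm_one, mul_one, Real.norm_eq_abs]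

  have hfG : ∀ s : ℝ, 0 ≤ s → f s = G s := by
    intro s hs; rw [hGabs, abs_of_nonneg hs]
  -- directional derivative along e0
  have hfe0 : ∀ s : ℝ, fderiv ℝ u (x₀ + s • e0) e0 = w s := by
    intro s
    exact (aux_line_deriv hudiff x₀ e0 s).deriv.symm
  -- spacelike bound for all s
  have hwlt : ∀ s : ℝ, |w s| < 1 := by
    intro s
    have hgr : inner ℝ (gradient u (x₀ + s • e0)) e0 = fderiv ℝ u (x₀ + s • e0) e0 :=
      InnerProductSpace.toDual_symm_apply
    have h1 : |w s| ≤ ‖gradient u (x₀ + s • e0)‖ * ‖e0‖ := by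
      rw [← hfe0 s, ← hgr]
      exact abs_real_inner_le_norm _ _
    have h2 : ‖e0‖ = 1 := by rw [he0]; simp
    rw [h2, mul_one] at h1
    exact lt_of_le_of_lt h1 (hsp _)
  have hpos : ∀ s : ℝ, 0 < 1 - w s ^ 2 := by
    intro s
    have h := hwlt s
    nlinarith [sq_abs (w s), abs_nonneg (w s)]
  -- w 0 = 0
  have hGeven : ∀ s : ℝ, G (-s) = G s := by
    intro s; rw [hGabs, hGabs, abs_neg]
  have hw0 : w 0 = 0 := aux_even_deriv_zero hGeven (hGd 0)
  -- Hessian e0 e0 entry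
  have hH00 : ∀ t : ℝ, iteratedFDeriv ℝ 2 u (x₀ + t • e0) ![e0, e0] = deriv w t := by
    intro t
    have h2 := aux_line_deriv2 hC2 (x₀ + t • e0) e0
    have hfun : (fun r : ℝ => fderiv ℝ u (x₀ + t • e0 + r • e0) e0)
        = fun r : ℝ => w (t + r) := by
      funext r
      rw [show x₀ + t • e0 + r • e0 = x₀ + (t + r) • e0 by rw [add_smul]; abel, hfe0]
    rw [hfun] at h2
    have h3 : HasDerivAt (fun r : ℝ => w (t + r)) (deriv w t) 0 := by
      have := HasDerivAt.comp (0:ℝ)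
        (show HasDerivAt w (deriv w t) ((fun r : ℝ => t + r) 0) by
          simpa using (hwd (t + 0)).hasDerivAt)
        ((hasDerivAt_id 0).const_add t)
      simpa [Function.comp_def] using this
    exact (h3.unique h2).symm
  -- norms of combinations t•e0 + s•eᵢ
  have hnorm : ∀ i : Fin n, i ≠ 0 → ∀ a b : ℝ,
      ‖a • e0 + b • (EuclideanSpace.single i (1:ℝ))‖ = Real.sqrt (a^2 + b^2) := by
    intro i hi a b
    have hinner : (inner ℝ (a • e0) (b • EuclideanSpace.single i (1:ℝ)) : ℝ) = 0 := by
      rw [real_inner_smul_left, real_inner_smul_right, he0,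
        EuclideanSpace.inner_single_left]
      simp [EuclideanSpace.single_apply, hi.symm]
    have hsq : ‖a • e0 + b • EuclideanSpace.single i (1:ℝ)‖^2 = a^2 + b^2 := by
      rw [norm_add_sq_real, hinner, norm_smul, norm_smul, he0]
      simp [mul_pow, sq_abs]
    rw [← hsq, Real.sqrt_sq (norm_nonneg _)]
  -- first derivative in an orthogonal direction
  have hA : ∀ i : Fin n, i ≠ 0 → ∀ t : ℝ, 0 < t → ∀ s : ℝ,
      fderiv ℝ u (x₀ + t • e0 + s • EuclideanSpace.single i (1:ℝ))
        (EuclideanSpace.single i (1:ℝ))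
      = w (Real.sqrt (t^2 + s^2)) * (s / Real.sqrt (t^2 + s^2)) := by
    intro i hi t ht s
    have hts : (0:ℝ) < t^2 + s^2 := by positivity
    have h1 := aux_line_deriv hudiff
      (x₀ + t • e0 + s • EuclideanSpace.single i (1:ℝ)) (EuclideanSpace.single i (1:ℝ)) 0
    rw [zero_smul, add_zero] at h1
    have hfun : (fun r : ℝ => u (x₀ + t • e0 + s • EuclideanSpace.single i (1:ℝ)
        + r • EuclideanSpace.single i (1:ℝ)))
        = fun r : ℝ => G (Real.sqrt (t^2 + (s + r)^2)) := by
      funext r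
      have hx : x₀ + t • e0 + s • EuclideanSpace.single i (1:ℝ)
          + r • EuclideanSpace.single i (1:ℝ)
          = x₀ + (t • e0 + (s + r) • EuclideanSpace.single i (1:ℝ)) := by
        rw [add_smul]; abel
      rw [hx, hu, add_sub_cancel_left, hnorm i hi t (s+r),
        hfG _ (Real.sqrt_nonneg _)]
    rw [hfun] at h1
    have hq : HasDerivAt (fun r : ℝ => t^2 + (s + r)^2) (2 * (s + 0)) 0 := by
      have := (((hasDerivAt_id (0:ℝ)).const_add s).pow 2).const_add (t^2)
      simpa using this
    have h0 : t^2 + (s + 0)^2 ≠ 0 := by positivity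
    have hsqr : HasDerivAt (fun r : ℝ => Real.sqrt (t^2 + (s + r)^2))
        (1 / (2 * Real.sqrt (t^2 + (s+0)^2)) * (2 * (s + 0))) 0 :=
      (Real.hasDerivAt_sqrt h0).comp 0 hq
    have hGc : HasDerivAt (fun r : ℝ => G (Real.sqrt (t^2 + (s + r)^2)))
        (w (Real.sqrt (t^2+(s+0)^2)) * (1 / (2 * Real.sqrt (t^2+(s+0)^2)) * (2 * (s+0)))) 0 :=
      HasDerivAt.comp (h := fun r : ℝ => Real.sqrt (t^2 + (s + r)^2)) 0
        (show HasDerivAt G (w (Real.sqrt (t^2+(s+0)^2))) (Real.sqrt (t^2+(s+0)^2)) from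
          (hGd _).hasDerivAt) hsqr
    have huniq := h1.unique hGc
    rw [huniq]
    simp only [add_zero]
    have hsp' : 0 < Real.sqrt (t^2 + s^2) := Real.sqrt_pos.mpr hts
    field_simp
  -- Hessian in an orthogonal direction
  have hH : ∀ i : Fin n, i ≠ 0 → ∀ t : ℝ, 0 < t →
      iteratedFDeriv ℝ 2 u (x₀ + t • e0)
        ![EuclideanSpace.single i (1:ℝ), EuclideanSpace.single i (1:ℝ)] = w t / t := by
    intro i hi t ht
    have h2 := aux_line_deriv2 hC2 (x₀ + t • e0) (EuclideanSpace.single i (1:ℝ))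
    have hfun : (fun s : ℝ => fderiv ℝ u (x₀ + t • e0 + s • EuclideanSpace.single i (1:ℝ))
        (EuclideanSpace.single i (1:ℝ)))
        = fun s : ℝ => s * (w (Real.sqrt (t^2 + s^2)) / Real.sqrt (t^2 + s^2)) := by
      funext s; rw [hA i hi t ht s]; ring
    rw [hfun] at h2
    have hρpos : (0:ℝ) < Real.sqrt (t^2 + 0^2) := Real.sqrt_pos.mpr (by positivity)
    have hρd : DifferentiableAt ℝ (fun s : ℝ => Real.sqrt (t^2 + s^2)) 0 := by
      apply DifferentiableAt.sqrt
      · fun_prop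
      · positivity
    have hBd : DifferentiableAt ℝ
        (fun s : ℝ => w (Real.sqrt (t^2 + s^2)) / Real.sqrt (t^2 + s^2)) 0 := by
      apply DifferentiableAt.div
      · exact DifferentiableAt.comp 0 (hwd _) hρd
      · exact hρd
      · exact hρpos.ne'
    have hprod : HasDerivAt
        (fun s : ℝ => s * (w (Real.sqrt (t^2 + s^2)) / Real.sqrt (t^2 + s^2)))
        (1 * (w (Real.sqrt (t^2 + 0^2)) / Real.sqrt (t^2 + 0^2))
          + 0 * deriv (fun s : ℝ => w (Real.sqrt (t^2 + s^2)) / Real.sqrt (t^2 + s^2)) 0) 0 := by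
      have := (hasDerivAt_id (0:ℝ)).mul hBd.hasDerivAt
      simpa [Pi.mul_def] using this
    have huniq := h2.unique hprod
    rw [huniq]
    rw [one_mul, zero_mul, add_zero]
    norm_num [Real.sqrt_sq ht.le]
  -- the gradient along the axis
  have hgrad : ∀ t : ℝ, 0 < t → gradient u (x₀ + t • e0) = w t • e0 := by
    intro t ht
    have hf : fderiv ℝ u (x₀ + t • e0)
        = InnerProductSpace.toDual ℝ (EuclideanSpace ℝ (Fin n)) (w t • e0) := by
      apply ContinuousLinearMap.coe_injective
      apply Module.Basis.ext (EuclideanSpace.basisFun (Fin n) ℝ).toBasis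
      intro i
      have hbi : (EuclideanSpace.basisFun (Fin n) ℝ).toBasis i
          = EuclideanSpace.single i (1:ℝ) := by
        rw [OrthonormalBasis.coe_toBasis, EuclideanSpace.basisFun_apply]
      rw [hbi]
      show fderiv ℝ u (x₀ + t • e0) (EuclideanSpace.single i (1:ℝ))
        = InnerProductSpace.toDual ℝ (EuclideanSpace ℝ (Fin n)) (w t • e0)
            (EuclideanSpace.single i (1:ℝ))
      rw [InnerProductSpace.toDual_apply_apply, real_inner_smul_left, he0,
        EuclideanSpace.inner_single_left]
      rcases eq_or_ne i 0 with h0 | h0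
      · subst h0
        rw [← he0, hfe0 t]
        simp [he0, EuclideanSpace.single_apply]
      · have := hA i h0 t ht 0
        rw [zero_smul, add_zero] at this
        rw [this]
        simp [EuclideanSpace.single_apply, h0.symm]
    show (InnerProductSpace.toDual ℝ (EuclideanSpace ℝ (Fin n))).symm
        (fderiv ℝ u (x₀ + t • e0)) = w t • e0
    rw [hf, LinearIsometryEquiv.symm_apply_apply]
  -- Hessian applied to the gradient
  have hF00 : ∀ t : ℝ, fderiv ℝ (fderiv ℝ u) (x₀ + t • e0) e0 e0 = deriv w t := by
    intro t
    have := hH00 t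
    rwa [iteratedFDeriv_two_apply, Matrix.cons_val_zero, Matrix.cons_val_one,
      Matrix.cons_val_zero] at this
  have hgradH : ∀ t : ℝ, 0 < t →
      iteratedFDeriv ℝ 2 u (x₀ + t • e0)
        ![gradient u (x₀ + t • e0), gradient u (x₀ + t • e0)]
      = w t * (w t * deriv w t) := by
    intro t ht
    rw [hgrad t ht, iteratedFDeriv_two_apply, Matrix.cons_val_zero, Matrix.cons_val_one,
      Matrix.cons_val_zero]
    simp only [map_smul, ContinuousLinearMap.smul_apply, smul_eq_mul]
    rw [hF00 t]
  have hgradnorm : ∀ t : ℝ, 0 < t → ‖gradient u (x₀ + t • e0)‖^2 = w t ^ 2 := by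
    intro t ht
    rw [hgrad t ht, norm_smul, he0, EuclideanSpace.norm_single]
    simp [mul_pow, sq_abs]
  -- the ODE for w
  have hODE : ∀ t : ℝ, 0 < t →
      deriv w t / (1 - w t ^ 2) + ((n:ℝ) - 1) / t * w t = 1 := by
    intro t ht
    have hsum : (∑ i : Fin n, iteratedFDeriv ℝ 2 u (x₀ + t • e0)
        ![EuclideanSpace.single i 1, EuclideanSpace.single i 1])
        = deriv w t + ((n:ℝ) - 1) * (w t / t) := by
      rw [← Finset.add_sum_erase Finset.univ _ (Finset.mem_univ (0 : Fin n))]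
      congr 1
      · rw [← he0]; exact hH00 t
      · rw [Finset.sum_congr rfl
          (fun i hi => hH i (Finset.ne_of_mem_erase hi) t ht),
          Finset.sum_const, Finset.card_erase_of_mem (Finset.mem_univ _),
          Finset.card_univ, Fintype.card_fin, nsmul_eq_mul]
        congr 1
        rw [Nat.cast_sub (by omega)]; norm_num
    have h := heq (x₀ + t • e0)
    rw [hsum, hgradH t ht, hgradnorm t ht] at h
    have h1 : (0:ℝ) < 1 - w t ^ 2 := hpos t
    have ht' : t ≠ 0 := ne_of_gt ht
    field_simp at h ⊢
    nlinarith [h]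
  -- positivity of w on (0, ∞)
  have hdw : ∀ t : ℝ, 0 < t →
      deriv w t = (1 - ((n:ℝ) - 1) / t * w t) * (1 - w t ^ 2) := by
    intro t ht
    have h2 : deriv w t / (1 - w t ^ 2) = 1 - ((n:ℝ) - 1) / t * w t := by
      linarith [hODE t ht]
    rw [div_eq_iff (hpos t).ne'] at h2
    exact h2
  set ψ : ℝ → ℝ := fun s => s^(n-1) * (w s / Real.sqrt (1 - w s ^ 2)) with hψ
  have hSpos : ∀ s : ℝ, 0 < Real.sqrt (1 - w s ^ 2) :=
    fun s => Real.sqrt_pos.mpr (hpos s)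
  have hψcont : Continuous ψ := by
    apply Continuous.mul (continuous_pow _)
    exact hwc.div ((Real.continuous_sqrt).comp (continuous_const.sub (hwc.pow 2)))
      (fun s => (hSpos s).ne')
  have hψderiv : ∀ t ∈ interior (Set.Ici (0:ℝ)), 0 < deriv ψ t := by
    rw [interior_Ici]
    intro t ht
    have hw' : HasDerivAt w (deriv w t) t := (hwd t).hasDerivAt
    have hsq : HasDerivAt (fun s => 1 - w s ^ 2) (-(2 * w t ^ 1 * deriv w t)) t := by
      have := (hw'.pow 2).const_sub 1
      simpa using this
    have hsqrt : HasDerivAt (fun s => Real.sqrt (1 - w s ^ 2))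
        (1 / (2 * Real.sqrt (1 - w t ^ 2)) * (-(2 * w t ^ 1 * deriv w t))) t :=
      (Real.hasDerivAt_sqrt (hpos t).ne').comp t hsq
    have hdiv : HasDerivAt (fun s => w s / Real.sqrt (1 - w s ^ 2))
        ((deriv w t * Real.sqrt (1 - w t ^ 2)
          - w t * (1 / (2 * Real.sqrt (1 - w t ^ 2)) * (-(2 * w t ^ 1 * deriv w t))))
            / (Real.sqrt (1 - w t ^ 2))^2) t :=
      hw'.div hsqrt (hSpos t).ne'
    have hmul := (hasDerivAt_pow (n-1) t).mul hdiv
    have hval : ((↑(n-1) : ℝ) * t^(n-1-1) * (w t / Real.sqrt (1 - w t ^ 2))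
        + t^(n-1) * ((deriv w t * Real.sqrt (1 - w t ^ 2)
          - w t * (1 / (2 * Real.sqrt (1 - w t ^ 2)) * (-(2 * w t ^ 1 * deriv w t))))
            / (Real.sqrt (1 - w t ^ 2))^2))
        = t^(n-1) / Real.sqrt (1 - w t ^ 2) := by
      have hS2 : (Real.sqrt (1 - w t ^ 2))^2 = 1 - w t ^ 2 := Real.sq_sqrt (hpos t).le
      have hc : ((n-1 : ℕ) : ℝ) = (n:ℝ) - 1 := by
        rw [Nat.cast_sub (by omega)]; norm_num
      have hpow : t^(n-1) = t^(n-2) * t := by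
        rw [← pow_succ]; congr 1; omega
      have hpow2 : n - 1 - 1 = n - 2 := rfl
      rw [hc, hpow2, hpow]
      exact aux_alg (w t) (deriv w t) (Real.sqrt (1 - w t ^ 2)) t (t^(n-2)) ((n:ℝ)-1)
        (hSpos t).ne' (ne_of_gt ht) hS2 (hdw t ht)
    have hψd : HasDerivAt ψ (t^(n-1) / Real.sqrt (1 - w t ^ 2)) t := by
      rw [← hval]; exact hmul
    rw [hψd.deriv]
    exact div_pos (pow_pos ht _) (hSpos t)
  have hmono : StrictMonoOn ψ (Set.Ici 0) :=
    strictMonoOn_of_deriv_pos (convex_Ici 0) hψcont.continuousOn hψderiv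
  have hψ0 : ψ 0 = 0 := by
    rw [hψ]
    simp [zero_pow (show n - 1 ≠ 0 by omega)]
  have hwpos : ∀ t : ℝ, 0 < t → 0 < w t := by
    intro t ht
    have h1 : ψ 0 < ψ t := hmono Set.self_mem_Ici (le_of_lt ht) ht
    rw [hψ0] at h1
    by_contra hle
    push_neg at hle
    have h2 : ψ t ≤ 0 := by
      apply mul_nonpos_of_nonneg_of_nonpos (pow_nonneg ht.le _)
      exact div_nonpos_of_nonpos_of_nonneg hle (Real.sqrt_nonneg _)
    linarith
  -- relating derivatives of f and w
  have hfeqG : ∀ t : ℝ, 0 < t → f =ᶠ[𝓝 t] G := fun t ht =>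
    eventually_of_mem (Ioi_mem_nhds ht) (fun s hs => hfG s (le_of_lt hs))
  have hderivr : ∀ t : ℝ, 0 < t → deriv (fun s => f s - f 0) t = w t := by
    intro t ht
    rw [deriv_sub_const]
    exact (hfeqG t ht).deriv_eq
  have hderiv2 : ∀ t : ℝ, 0 < t →
      deriv (deriv (fun s => f s - f 0)) t = deriv w t := by
    intro t ht
    have hev : deriv (fun s => f s - f 0) =ᶠ[𝓝 t] w :=
      eventually_of_mem (Ioi_mem_nhds ht) (fun s hs => hderivr s hs)
    exact hev.deriv_eq
  have hEqOn : Set.EqOn (fun s => f s - f 0) (fun s => G s - G 0) (Set.Ici 0) := by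
    intro s hs
    simp only
    rw [hfG s hs, hfG 0 le_rfl]
  refine ⟨?_, ?_, ?_, ?_, ?_, ?_⟩
  · exact ((hGC2.sub contDiff_const).contDiffOn).congr hEqOn
  · intro t ht
    rw [hderiv2 t ht, hderivr t ht]
    exact hODE t ht
  · simp
  · rw [derivWithin_congr hEqOn (by simp [hfG 0 le_rfl])]
    rw [DifferentiableAt.derivWithin (f := fun s => G s - G 0) ((hGd 0).sub (differentiableAt_const _))
      (uniqueDiffOn_Ici 0 0 Set.self_mem_Ici)]
    rw [deriv_sub_const]
    exact hw0
  · intro t ht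
    refine ⟨by rw [hderivr t ht]; exact hwpos t ht, ?_⟩
    rw [hderivr t ht]
    exact (abs_lt.mp (hwlt t)).2
  · intro x
    simp only
    rw [hu x, hu x₀]
    simp
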